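/- Let N be coprime to b>1 with gcd(N, |b|_N) = r a prime. Then N has the Midy property for b and every divisor d>1 of |b|_N if and only if N = r·p_1^{e_1}···p_l^{e_l} with r, p_i distinct primes and |b|_N = |b|_{p_i} = r^s·|b|_r for all i, for some positive integer s. -/

import Mathlib

/-- The multiplicative order of `b` modulo `N`. -/
noncomputable def ord (b N : ℕ) : ℕ := orderOf (b : ZMod N)

/-- `N` has the Midy property for base `b` and `d` (where `|b|_N = k·d`):
`ν_p(N) ≤ ν_p(d)` for all primes `p` dividing `gcd(b^k − 1, N)`. -/
def HasMidy (b N d : ℕ) : Prop :=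
  ∀ p : ℕ, p.Prime → p ∣ Nat.gcd (b ^ (ord b N / d) - 1) N →
    padicValNat p N ≤ padicValNat p d

private lemma ord_pos' {b N : ℕ} (hN : N ≠ 0) (hco : Nat.Coprime N b) : 0 < ord b N := by
  haveI : NeZero N := ⟨hN⟩
  have h : (ZMod.unitOfCoprime b hco.symm : ZMod N) = (b : ZMod N) := rfl
  rw [ord, ← h, orderOf_units]
  exact orderOf_pos _

private lemma ord_dvd_ord {b m N : ℕ} (h : m ∣ N) : ord b m ∣ ord b N := by
  apply orderOf_dvd_of_pow_eq_one
  have h1 : ((b : ZMod N) ^ (ord b N)) = 1 := pow_orderOf_eq_one _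
  have h2 := congrArg (ZMod.castHom h (ZMod m)) h1
  simpa only [map_pow, map_natCast, map_one] using h2

private lemma dvd_pow_sub_one_iff {b : ℕ} (n k : ℕ) (hb : 1 ≤ b) :
    n ∣ b ^ k - 1 ↔ ord b n ∣ k := by
  rw [← Nat.modEq_iff_dvd' (Nat.one_le_pow _ _ hb), ord, orderOf_dvd_iff_pow_eq_one,
    Nat.ModEq.comm, ← ZMod.natCast_eq_natCast_iff]
  push_cast
  rfl

private lemma not_dvd_ord_self {b r : ℕ} (hr : r.Prime) (h : ¬ r ∣ b) : ¬ r ∣ ord b r := by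
  haveI : Fact r.Prime := ⟨hr⟩
  have h2 : ord b r ∣ r - 1 := ZMod.orderOf_dvd_card_sub_one (by
    simpa [Ne, ZMod.natCast_eq_zero_iff] using h)
  intro hc
  have h3 := hc.trans h2
  have := hr.two_le
  exact absurd (Nat.le_of_dvd (by omega) h3) (by omega)

theorem stmt7 (b N r : ℕ) (hb : 1 < b) (hN : 0 < N) (hco : Nat.Coprime N b)
    (hr : r.Prime) (hg : Nat.gcd N (ord b N) = r) :
    (∀ d : ℕ, 1 < d → d ∣ ord b N → HasMidy b N d) ↔
      (r ∣ N ∧ ¬ r ^ 2 ∣ N ∧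
        ∃ s : ℕ, 1 ≤ s ∧
          (∀ p : ℕ, p.Prime → p ∣ N → p ≠ r → ord b N = ord b p) ∧
            ord b N = r ^ s * ord b r) := by
  haveI : Fact r.Prime := ⟨hr⟩
  set e := ord b N with hee
  have hrN : r ∣ N := hg ▸ Nat.gcd_dvd_left N e
  have hre0 : r ∣ e := hg ▸ Nat.gcd_dvd_right N e
  have hrb : ¬ r ∣ b := (Nat.Prime.coprime_iff_not_dvd hr).mp
    (Nat.Coprime.coprime_dvd_left hrN hco)
  have he : 0 < e := ord_pos' hN.ne' hco
  have horr : ¬ r ∣ ord b r := not_dvd_ord_self hr hrb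
  have hordr_dvd : ord b r ∣ e := ord_dvd_ord hrN
  have hordr_pos : 0 < ord b r :=
    ord_pos' hr.pos.ne' (Nat.Coprime.coprime_dvd_left hrN hco)
  have hcor : Nat.Coprime r (ord b r) := (Nat.Prime.coprime_iff_not_dvd hr).mpr horr
  have hiff : ∀ n k : ℕ, n ∣ b ^ k - 1 ↔ ord b n ∣ k := fun n k =>
    dvd_pow_sub_one_iff n k hb.le
  constructor
  · intro h
    refine ⟨hrN, ?_, padicValNat r e, ?_, ?_, ?_⟩
    · -- ¬ r ^ 2 ∣ N
      intro hsq
      have h2 : 2 ≤ padicValNat r N := (padicValNat_dvd_iff_le hN.ne').mp hsq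
      have hor : ord b r ∣ e / r := by
        rw [Nat.dvd_div_iff_mul_dvd hre0]
        exact Nat.Coprime.mul_dvd_of_dvd_of_dvd hcor hre0 hordr_dvd
      have := h r hr.one_lt hre0 r hr (Nat.dvd_gcd ((hiff r _).mpr hor) hrN)
      rw [padicValNat.self hr.one_lt] at this
      omega
    · exact one_le_padicValNat_of_dvd he.ne' hre0
    · -- all other prime divisors have full order
      intro p hp hpN hpr
      haveI : Fact p.Prime := ⟨hp⟩
      have hpe : ord b p ∣ e := ord_dvd_ord hpN
      by_contra hne
      obtain ⟨t, het⟩ := hpe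
      have ht1 : t ≠ 1 := by
        intro h1
        rw [h1, mul_one] at het
        exact hne het
      have ht0 : t ≠ 0 := by
        intro h0; rw [h0, mul_zero] at het; omega
      have hqp : t.minFac.Prime := Nat.minFac_prime ht1
      have hqt : t.minFac ∣ t := Nat.minFac_dvd t
      have hqe : t.minFac ∣ e := het ▸ (hqt.trans (Dvd.intro_left _ rfl))
      have hpq : ord b p ∣ e / t.minFac := by
        rw [Nat.dvd_div_iff_mul_dvd hqe, mul_comm, het]
        exact Nat.mul_dvd_mul_left (ord b p) hqt
      have hmain := h t.minFac hqp.one_lt hqe p hp (Nat.dvd_gcd ((hiff p _).mpr hpq) hpN)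
      have hpq' : ¬ p ∣ t.minFac := by
        intro hd
        have : p = t.minFac := (Nat.prime_dvd_prime_iff_eq hp hqp).mp hd
        have hqe' : p ∣ e := by rw [this]; exact hqe
        have h4 : p ∣ Nat.gcd N e := Nat.dvd_gcd hpN hqe'
        rw [hg] at h4
        exact hpr ((Nat.prime_dvd_prime_iff_eq hp hr).mp h4)
      rw [padicValNat.eq_zero_of_not_dvd hpq'] at hmain
      have := one_le_padicValNat_of_dvd hN.ne' hpN
      omega
    · -- e = r ^ s * ord b r
      set s := padicValNat r e with hs
      have hrs : r ^ s ∣ e := pow_padicValNat_dvd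
      set m := e / r ^ s with hm
      have hem : r ^ s * m = e := Nat.mul_div_cancel' hrs
      have hrm : ¬ r ∣ m := by
        intro hd
        apply pow_succ_padicValNat_not_dvd (p := r) he.ne'
        rw [pow_succ]
        calc r ^ s * r ∣ r ^ s * m := Nat.mul_dvd_mul_left _ hd
          _ = e := hem
      have hcop : Nat.Coprime (ord b r) (r ^ s) := Nat.Coprime.pow_right s hcor.symm
      have hordm : ord b r ∣ m := by
        apply hcop.dvd_of_dvd_mul_right
        rw [mul_comm, hem]
        exact hordr_dvd
      suffices hms : m = ord b r by rw [← hem, hms]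
      by_contra hne
      obtain ⟨t, het⟩ := hordm
      have hm0 : m ≠ 0 := by intro h0; rw [h0, mul_zero] at hem; omega
      have ht1 : t ≠ 1 := by
        intro h1; rw [h1, mul_one] at het; exact hne het
      have ht0 : t ≠ 0 := by intro h0; rw [h0, mul_zero] at het; exact hm0 het
      have hqp : t.minFac.Prime := Nat.minFac_prime ht1
      have hqt : t.minFac ∣ t := Nat.minFac_dvd t
      have hme : m ∣ e := Dvd.intro_left _ hem
      have hqm : t.minFac ∣ m := het ▸ (hqt.trans (Dvd.intro_left _ rfl))
      have hqe : t.minFac ∣ e := hqm.trans hme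
      have hrq : ord b r ∣ e / t.minFac := by
        rw [Nat.dvd_div_iff_mul_dvd hqe, mul_comm]
        refine dvd_trans ?_ hme
        rw [het]
        exact Nat.mul_dvd_mul_left (ord b r) hqt
      have hmain := h t.minFac hqp.one_lt hqe r hr (Nat.dvd_gcd ((hiff r _).mpr hrq) hrN)
      have h1 := one_le_padicValNat_of_dvd hN.ne' hrN
      have hrdq : r ∣ t.minFac := by
        by_contra hnd
        rw [padicValNat.eq_zero_of_not_dvd hnd] at hmain
        omega
      exact hrm (((Nat.prime_dvd_prime_iff_eq hr hqp).mp hrdq) ▸ hqm)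
  · rintro ⟨hrN', hr2, s, hs1, hordp, heq⟩ d hd1 hdd p hp hpg
    haveI : Fact p.Prime := ⟨hp⟩
    have hpN : p ∣ N := hpg.trans (Nat.gcd_dvd_right _ _)
    have hp1 : p ∣ b ^ (e / d) - 1 := hpg.trans (Nat.gcd_dvd_left _ _)
    have hpe : ord b p ∣ e / d := (hiff p _).mp hp1
    by_cases hpr : p = r
    · subst hpr
      have h1 : d * ord b p ∣ e := (Nat.dvd_div_iff_mul_dvd hdd).mp hpe
      have h2 : d ∣ p ^ s := by
        have h3 : ord b p * d ∣ ord b p * p ^ s := by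
          rw [mul_comm (ord b p) d, mul_comm (ord b p) (p ^ s), ← heq]
          exact h1
        exact (Nat.mul_dvd_mul_iff_left hordr_pos).mp h3
      have hrd : p ∣ d := by
        obtain ⟨i, hi, rfl⟩ := (Nat.dvd_prime_pow hr).mp h2
        exact dvd_pow_self p (by rintro rfl; simp at hd1)
      have hle : padicValNat p N ≤ 1 := by
        by_contra hgt
        exact hr2 ((padicValNat_dvd_iff_le hN.ne').mpr (by omega))
      have hge : 1 ≤ padicValNat p d := one_le_padicValNat_of_dvd (by omega) hrd
      omega
    · have heqp : e = ord b p := hordp p hp hpN hpr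
      have hdpos : 0 < e / d := Nat.div_pos (Nat.le_of_dvd he hdd) (by omega)
      have hle : e ≤ e / d := Nat.le_of_dvd hdpos (heqp ▸ hpe)
      have hlt : e / d < e := Nat.div_lt_self he hd1
      omega
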